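/- Let $(C,D)$ be a regular MASA inclusion and suppose $N \subseteq N(C,D)$ is a countable set such that the norm-closed $D$-bimodule generated by $N$ is $C$, i.e., the closed linear span of $\{d v e : v \in N,\ d,e \in D\}$ equals $C$. Then the set $\{\sigma \in \hat{D} : \sigma \text{ has a unique extension to a state on } C\}$ is dense in the character space $\hat{D}$ (with the weak-* topology). -/

import Mathlib

open scoped ComplexOrder

/-- `v` is a normalizer of the subset `S`:  `v* S v ⊆ S` and `v S v* ⊆ S`. -/
def IsNormalizer {C : Type*} [Mul C] [Star C] (S : Set C) (v : C) : Prop :=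
  ∀ d ∈ S, star v * d * v ∈ S ∧ v * d * star v ∈ S

section AuxiliaryLemmas
set_option linter.unusedSectionVars false
set_option maxHeartbeats 1000000

variable {C : Type*} [NormedRing C] [StarRing C] [CStarRing C] [NormedAlgebra ℂ C]
  [CompleteSpace C] [StarModule ℂ C]

private lemma pf_im {ρ : C →ₗ[ℂ] ℂ} (hpos : ∀ x : C, 0 ≤ ρ (star x * x)) (x : C) :
    (ρ (star x * x)).im = 0 :=
  ((Complex.le_def.mp (hpos x)).2).symm

private lemma pf_re {ρ : C →ₗ[ℂ] ℂ} (hpos : ∀ x : C, 0 ≤ ρ (star x * x)) (x : C) :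
    0 ≤ (ρ (star x * x)).re :=
  (Complex.le_def.mp (hpos x)).1

private lemma pf_herm {ρ : C →ₗ[ℂ] ℂ} (hpos : ∀ x : C, 0 ≤ ρ (star x * x)) (a b : C) :
    ρ (star b * a) = starRingEnd ℂ (ρ (star a * b)) := by
  have e1 : ρ (star (a + b) * (a + b))
      = ρ (star a * a) + ρ (star a * b) + ρ (star b * a) + ρ (star b * b) := by
    rw [star_add]
    simp only [add_mul, mul_add, map_add]
    ring
  have e2 : ρ (star (a + Complex.I • b) * (a + Complex.I • b))
      = ρ (star a * a) + Complex.I * ρ (star a * b) - Complex.I * ρ (star b * a)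
        + ρ (star b * b) := by
    rw [star_add, star_smul]
    simp only [add_mul, mul_add, map_add, smul_mul_assoc, mul_smul_comm, map_smul, smul_smul,
      smul_eq_mul, Complex.star_def, Complex.conj_I]
    ring_nf
    rw [Complex.I_sq]
    ring
  have h1 := pf_im hpos (a + b)
  have h2 := pf_im hpos (a + Complex.I • b)
  have ha := pf_im hpos a
  have hb := pf_im hpos b
  rw [e1] at h1
  rw [e2] at h2
  simp only [Complex.add_im, Complex.sub_im, Complex.mul_im, Complex.I_re, Complex.I_im,
    ha, hb, zero_mul, one_mul, mul_zero, zero_add, add_zero] at h1 h2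
  apply Complex.ext <;>
    simp only [Complex.conj_re, Complex.conj_im] <;> linarith

private lemma pf_cs {ρ : C →ₗ[ℂ] ℂ} (hpos : ∀ x : C, 0 ≤ ρ (star x * x)) (a b : C) :
    Complex.normSq (ρ (star a * b)) ≤ (ρ (star a * a)).re * (ρ (star b * b)).re := by
  set z := ρ (star a * b) with hz
  by_cases h0 : z = 0
  · simp [h0, Complex.normSq]
    exact mul_nonneg (pf_re hpos a) (pf_re hpos b)
  · have quad : ∀ s : ℝ, 0 ≤ ((ρ (star b * b)).re * Complex.normSq z) * (s * s)
        + (-(2 * Complex.normSq z)) * s + (ρ (star a * a)).re := by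
      intro s
      have key := pf_re hpos (a + (-(s : ℂ) * starRingEnd ℂ z) • b)
      have expand : ρ (star (a + (-(s : ℂ) * starRingEnd ℂ z) • b)
            * (a + (-(s : ℂ) * starRingEnd ℂ z) • b))
          = ρ (star a * a) - (2 * s * Complex.normSq z : ℝ)
            + ((s * s * Complex.normSq z : ℝ)) * ρ (star b * b) := by
        rw [star_add, star_smul]
        simp only [add_mul, mul_add, map_add, smul_mul_assoc, mul_smul_comm, map_smul,
          smul_eq_mul, Complex.star_def, map_mul, map_neg, Complex.conj_conj, Complex.conj_ofReal]
        rw [pf_herm hpos a b, ← hz]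
        push_cast
        linear_combination ((-(s:ℂ)) + (-(s:ℂ)) + (s:ℂ) * (s:ℂ) * ρ (star b * b)) *
          Complex.mul_conj z
      rw [expand] at key
      simp only [Complex.add_re, Complex.sub_re, Complex.mul_re, Complex.ofReal_re,
        Complex.ofReal_im, pf_im hpos b, zero_mul, mul_zero, sub_zero] at key
      linarith
    have hd := discrim_le_zero quad
    rw [discrim] at hd
    have hnz : 0 < Complex.normSq z := Complex.normSq_pos.mpr h0
    nlinarith [hd, hnz]

private lemma pf_zero {ρ : C →ₗ[ℂ] ℂ} (hpos : ∀ x : C, 0 ≤ ρ (star x * x)) {c : C}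
    (hc : ρ (star c * c) = 0) (x : C) :
    ρ (star c * x) = 0 ∧ ρ (x * c) = 0 := by
  constructor
  · have h := pf_cs hpos c x
    rw [hc] at h
    simp only [Complex.zero_re, zero_mul] at h
    have := Complex.normSq_nonneg (ρ (star c * x))
    have h0 : Complex.normSq (ρ (star c * x)) = 0 := le_antisymm h this
    exact Complex.normSq_eq_zero.mp h0
  · have h := pf_cs hpos (star x) c
    rw [hc, star_star] at h
    simp only [Complex.zero_re, mul_zero] at h
    have := Complex.normSq_nonneg (ρ (x * c))
    have h0 : Complex.normSq (ρ (x * c)) = 0 := le_antisymm h this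
    exact Complex.normSq_eq_zero.mp h0

private lemma pf_bound {ρ : C →ₗ[ℂ] ℂ} (hpos : ∀ x : C, 0 ≤ ρ (star x * x)) (h1 : ρ 1 = 1) (x : C) :
    ‖ρ x‖ ≤ ‖x‖ := by
  letI : CStarAlgebra C :=
    { norm_mul_self_le := fun x => (CStarRing.norm_star_mul_self (x := x)).symm.le }
  letI := CStarAlgebra.spectralOrder C
  haveI := CStarAlgebra.spectralOrderedRing C
  have hmono : ∀ w : C, 0 ≤ w → 0 ≤ ρ w := by
    intro w hw
    rw [StarOrderedRing.nonneg_iff] at hw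
    induction hw using AddSubmonoid.closure_induction with
    | mem y hy => obtain ⟨s, rfl⟩ := hy; exact hpos s
    | zero => simp
    | add y z _ _ hy hz => rw [map_add]; exact add_nonneg hy hz
  have hsa : IsSelfAdjoint (star x * x) := IsSelfAdjoint.star_mul_self x
  have hle : star x * x ≤ algebraMap ℝ C ‖star x * x‖ := hsa.le_algebraMap_norm_self
  have h2 : 0 ≤ ρ (algebraMap ℝ C ‖star x * x‖ - star x * x) :=
    hmono _ (sub_nonneg.mpr hle)
  have halg : ρ (algebraMap ℝ C ‖star x * x‖) = (‖star x * x‖ : ℂ) := by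
    rw [IsScalarTower.algebraMap_apply ℝ ℂ C, Algebra.algebraMap_eq_smul_one, map_smul, h1,
      smul_eq_mul, mul_one]
    rfl
  rw [map_sub, halg] at h2
  have hre : (ρ (star x * x)).re ≤ ‖star x * x‖ := by
    have := (Complex.le_def.mp h2).1
    simp only [Complex.zero_re, Complex.sub_re, Complex.ofReal_re] at this
    linarith
  have hcs := pf_cs hpos 1 x
  rw [star_one, one_mul, mul_one, h1] at hcs
  simp only [Complex.one_re, one_mul] at hcs
  have hx2 : Complex.normSq (ρ x) ≤ ‖x‖ * ‖x‖ := by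
    calc Complex.normSq (ρ x) ≤ (ρ (star x * x)).re := hcs
    _ ≤ ‖star x * x‖ := hre
    _ = ‖x‖ * ‖x‖ := CStarRing.norm_star_mul_self
  have : ‖ρ x‖ * ‖ρ x‖ = Complex.normSq (ρ x) := by
    rw [Complex.normSq_eq_norm_sq, sq]
  nlinarith [norm_nonneg (ρ x), norm_nonneg x]

private lemma hb_im_eq_zero [Nontrivial C] (g : C →L[ℂ] ℂ) (hg : ‖g‖ ≤ 1) (h1 : g 1 = 1)
    {a : C} (ha : IsSelfAdjoint a) : (g a).im = 0 := by
  have key : ∀ t : ℝ, (g a).re ^ 2 + ((g a).im + t) ^ 2 ≤ ‖a‖ ^ 2 + t ^ 2 := by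
    intro t
    set u := a + (Complex.I * t) • 1 with hu
    have hstar : star u = a - (Complex.I * t) • 1 := by
      rw [hu, star_add, star_smul, ha.star_eq, star_one, star_mul', Complex.star_def,
        Complex.conj_I, Complex.conj_ofReal]
      rw [neg_mul, neg_smul, sub_eq_add_neg]
    have hI : (Complex.I * (t : ℂ)) * (Complex.I * (t : ℂ)) = -((t : ℂ) ^ 2) := by
      rw [mul_mul_mul_comm, Complex.I_mul_I]
      ring
    set w : C := (Complex.I * (t : ℂ)) • 1 with hw
    have hcomm : a * w = w * a := by rw [hw, mul_smul_comm, smul_mul_assoc, mul_one, one_mul]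
    have hww : w * w = -(((t : ℂ) ^ 2) • 1) := by
      rw [hw, smul_mul_assoc, mul_smul_comm, smul_smul, mul_one, hI, neg_smul]
    have hprod : star u * u = a * a + ((t : ℂ) ^ 2) • 1 := by
      rw [hstar, hu]
      calc (a - w) * (a + w) = a * a + (a * w - w * a) - w * w := by
            rw [sub_mul, mul_add, mul_add]; abel
      _ = a * a + ((t : ℂ) ^ 2) • 1 := by rw [hcomm, hww]; abel
    have hnorm2 : ‖u‖ ^ 2 ≤ ‖a‖ ^ 2 + t ^ 2 := by
      have : ‖u‖ * ‖u‖ = ‖star u * u‖ := (CStarRing.norm_star_mul_self).symm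
      rw [hprod] at this
      have hb : ‖a * a + ((t : ℂ) ^ 2) • 1‖ ≤ ‖a‖ * ‖a‖ + t ^ 2 := by
        refine (norm_add_le _ _).trans ?_
        gcongr
        · exact norm_mul_le a a
        · rw [norm_smul, norm_one, mul_one]
          simp [abs_of_nonneg (sq_nonneg t)]
      nlinarith [norm_nonneg u]
    have hgu : g u = g a + Complex.I * t := by
      rw [hu, map_add, map_smul, h1, smul_eq_mul, mul_one]
    have hbound : ‖g u‖ ≤ ‖u‖ := by
      calc ‖g u‖ ≤ ‖g‖ * ‖u‖ := g.le_opNorm u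
      _ ≤ 1 * ‖u‖ := by gcongr
      _ = ‖u‖ := one_mul _
    have h2 : ‖g u‖ ^ 2 ≤ ‖a‖ ^ 2 + t ^ 2 := by
      nlinarith [norm_nonneg (g u), norm_nonneg u]
    have h3 : ‖g u‖ ^ 2 = (g a).re ^ 2 + ((g a).im + t) ^ 2 := by
      rw [hgu]
      simp only [Complex.sq_norm, Complex.normSq_apply, Complex.add_re,
        Complex.add_im, Complex.mul_re, Complex.mul_im, Complex.I_re, Complex.I_im,
        Complex.ofReal_re, Complex.ofReal_im]
      ring
    linarith [h3 ▸ h2]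
  by_contra hβ
  have hK := key ((‖a‖ ^ 2 - (g a).re ^ 2 - (g a).im ^ 2 + 1) / (2 * (g a).im))
  set β := (g a).im
  set T := (‖a‖ ^ 2 - (g a).re ^ 2 - β ^ 2 + 1) / (2 * β) with hT
  have hexp : 2 * β * T = ‖a‖ ^ 2 - (g a).re ^ 2 - β ^ 2 + 1 := by
    rw [hT]; field_simp
  nlinarith [hK]

private lemma hb_pos (g : C →L[ℂ] ℂ) (hg : ‖g‖ ≤ 1) (h1 : g 1 = 1) (x : C) :
    0 ≤ g (star x * x) := by
  rcases subsingleton_or_nontrivial C with hs | hn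
  · have : star x * x = 1 := Subsingleton.elim _ _
    rw [this, h1]
    exact zero_le_one
  letI : CStarAlgebra C :=
    { norm_mul_self_le := fun y => (CStarRing.norm_star_mul_self (x := y)).symm.le }
  set a := star x * x with hadef
  have ha : IsSelfAdjoint a := IsSelfAdjoint.star_mul_self x
  have hc : True := trivial
  set b := a - algebraMap ℂ C (‖a‖ : ℂ) with hb
  have hbsa : IsSelfAdjoint b := by
    refine ha.sub ?_
    rw [IsSelfAdjoint, ← algebraMap_star_comm, Complex.star_def, Complex.conj_ofReal]
  -- spectrum bound
  have hspec : ∀ k ∈ spectrum ℂ b, ‖k‖ ≤ ‖a‖ := by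
    intro k hk
    rw [hb, ← spectrum.sub_singleton_eq] at hk
    rw [Set.sub_singleton] at hk
    obtain ⟨μ, hμ, rfl⟩ := hk
    have hμre : μ = (μ.re : ℂ) := ha.mem_spectrum_eq_re hμ
    have hμr : (μ.re : ℝ) ∈ spectrum ℝ a := by
      rw [← IsSelfAdjoint.coe_mem_spectrum_complex ha]
      rw [← hμre]
      exact hμ
    have hge : 0 ≤ μ.re := spectrum_star_mul_self_nonneg _ hμr
    have hle : ‖μ‖ ≤ ‖a‖ := spectrum.norm_le_norm_of_mem hμ
    have hre_le : μ.re ≤ ‖a‖ := by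
      have h2 := abs_le.mp (le_trans (Complex.abs_re_le_norm μ) hle)
      exact h2.2
    rw [hμre]
    show ‖(μ.re : ℂ) - (‖a‖ : ℂ)‖ ≤ ‖a‖
    rw [show ((μ.re : ℂ) - (‖a‖ : ℂ)) = ((μ.re - ‖a‖ : ℝ) : ℂ) by push_cast; ring]
    rw [Complex.norm_real, Real.norm_eq_abs, abs_le]
    constructor <;> linarith
  have hnormb : ‖b‖ ≤ ‖a‖ := by
    have hrad : spectralRadius ℂ b = ‖b‖₊ := hbsa.spectralRadius_eq_nnnorm
    have hbd : spectralRadius ℂ b ≤ (‖a‖₊ : ENNReal) := by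
      rw [spectralRadius]
      refine iSup₂_le fun k hk => ?_
      have hkc := hspec k hk
      have h2 : ‖k‖₊ ≤ ‖a‖₊ := by exact_mod_cast hkc
      exact_mod_cast h2
    rw [hrad] at hbd
    have h3 : ‖b‖₊ ≤ ‖a‖₊ := by exact_mod_cast hbd
    exact_mod_cast h3
  have hgb : ‖g b‖ ≤ ‖a‖ :=
    le_trans (le_trans (g.le_opNorm b) (by nlinarith [norm_nonneg b])) hnormb
  have hgalg : g (algebraMap ℂ C (‖a‖ : ℂ)) = (‖a‖ : ℂ) := by
    rw [Algebra.algebraMap_eq_smul_one, map_smul, h1, smul_eq_mul, mul_one]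
  have him : (g a).im = 0 := hb_im_eq_zero g hg h1 ha
  have hgb2 : g b = ((g a).re - ‖a‖ : ℝ) := by
    rw [hb, map_sub, hgalg]
    apply Complex.ext
    · simp
    · simp [him]
  rw [hgb2] at hgb
  rw [Complex.norm_real, Real.norm_eq_abs, abs_le] at hgb
  rw [Complex.le_def]
  constructor
  · simp only [Complex.zero_re]
    linarith [hgb.1]
  · simp [him]

private lemma exists_state_extension [Nontrivial C] (D : StarSubalgebra ℂ C)
    (hDclosed : IsClosed (D : Set C)) (σ : WeakDual.characterSpace ℂ D) :
    ∃ ρ : C →ₗ[ℂ] ℂ, ρ 1 = 1 ∧ (∀ x : C, 0 ≤ ρ (star x * x)) ∧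
      ∀ d : D, ρ (d : C) = (σ : WeakDual ℂ D) d := by
  haveI : CompleteSpace D := hDclosed.completeSpace_coe
  haveI : NormOneClass D := ⟨show ‖((1 : D) : C)‖ = 1 from norm_one⟩
  have hσ : ∀ d : D, ‖(σ : WeakDual ℂ D) d‖ ≤ ‖d‖ := fun d =>
    spectrum.norm_le_norm_of_mem (WeakDual.CharacterSpace.apply_mem_spectrum σ d)
  set p : Submodule ℂ C := Subalgebra.toSubmodule D.toSubalgebra with hp
  have hmem : ∀ x : p, (x : C) ∈ D := fun x => x.2
  let l : p →ₗ[ℂ] ℂ :=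
    { toFun := fun x => (σ : WeakDual ℂ D) ⟨x.1, x.2⟩
      map_add' := by
        intro x y
        rw [← map_add]
        congr 1
      map_smul' := by
        intro m x
        rw [← map_smul]
        congr 1 }
  have hl : ∀ x : p, ‖l x‖ ≤ 1 * ‖x‖ := by
    intro x
    rw [one_mul]
    exact hσ ⟨x.1, x.2⟩
  let f : p →L[ℂ] ℂ := l.mkContinuous 1 hl
  obtain ⟨g, hext, hnorm⟩ := exists_extension_norm_eq p f
  have hgle : ‖g‖ ≤ 1 := by
    rw [hnorm]
    exact l.mkContinuous_norm_le zero_le_one hl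
  have h1mem : (1 : C) ∈ p := one_mem D.toSubalgebra
  have hg1 : g 1 = 1 := by
    have := hext ⟨1, h1mem⟩
    simp only [f, LinearMap.mkContinuous_apply] at this
    have h2 : (⟨(1 : C), h1mem⟩ : D) = 1 := Subtype.ext rfl
    rw [show l ⟨1, h1mem⟩ = (σ : WeakDual ℂ D) 1 by exact congrArg _ h2] at this
    rw [this]
    exact map_one σ
  refine ⟨g.toLinearMap, hg1, fun x => hb_pos g hgle hg1 x, fun d => ?_⟩
  have := hext ⟨(d : C), d.2⟩
  simp only [f, LinearMap.mkContinuous_apply] at this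
  rw [show (⟨(d : C), _⟩ : D) = d from Subtype.ext rfl] at this
  exact this

end AuxiliaryLemmas

set_option maxHeartbeats 2000000 in
theorem dense_unique_extension
    {C : Type*} [NormedRing C] [StarRing C] [CStarRing C] [NormedAlgebra ℂ C]
    [CompleteSpace C] [StarModule ℂ C]
    (D : StarSubalgebra ℂ C) (hDclosed : IsClosed (D : Set C))
    (hDcomm : ∀ a ∈ D, ∀ b ∈ D, a * b = b * a)
    -- `D` is a MASA in `C`
    (hmasa : ∀ x : C, (∀ d ∈ D, x * d = d * x) → x ∈ D)
    -- regularity: the span of the normalizers is dense in `C`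
    (hreg : Dense
      ((Submodule.span ℂ {v : C | IsNormalizer (D : Set C) v} : Submodule ℂ C) : Set C))
    (N : Set C) (hNcount : N.Countable) (hNnorm : ∀ v ∈ N, IsNormalizer (D : Set C) v)
    -- the norm-closed `D`-bimodule generated by `N` is all of `C`
    (hNgen : Dense
      ((Submodule.span ℂ {x : C | ∃ v ∈ N, ∃ d ∈ D, ∃ e ∈ D, x = d * v * e} :
        Submodule ℂ C) : Set C)) :
    Dense {σ : WeakDual.characterSpace ℂ D | ∃! ρ : C →ₗ[ℂ] ℂ,
      ρ 1 = 1 ∧ (∀ x : C, 0 ≤ ρ (star x * x)) ∧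
      ∀ d : D, ρ (d : C) = (σ : WeakDual ℂ D) d} := by
  classical
  rcases subsingleton_or_nontrivial C with htriv | hnontriv
  · intro σ
    exfalso
    have h0 : (1 : D) = 0 := Subtype.ext (Subsingleton.elim _ _)
    have h1 := map_one σ
    rw [h0, map_zero] at h1
    exact zero_ne_one h1
  haveI : Countable ↥N := hNcount.to_subtype
  letI : CStarAlgebra C :=
    { norm_mul_self_le := fun y => (CStarRing.norm_star_mul_self (x := y)).symm.le }
  letI instD : CommCStarAlgebra D :=
    { StarSubalgebra.cstarAlgebra D (h_closed := hDclosed) with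
      mul_comm := fun a b => Subtype.ext (hDcomm a a.2 b b.2) }
  set Ω := WeakDual.characterSpace ℂ D with hΩdef
  -- normalizer-induced elements of `D`
  let m : (v : ↥N) → D → D := fun v d => ⟨star (v : C) * ↑d * ↑v, (hNnorm ↑v v.2 ↑d d.2).1⟩
  let e₀ : (v : ↥N) → D := fun v => ⟨(v : C) * 1 * star (v : C), (hNnorm ↑v v.2 1 (one_mem D)).2⟩
  have hm : ∀ (v : ↥N) (d : D), ((m v d : D) : C) = star (v : C) * ↑d * ↑v := fun _ _ => rfl
  have he₀ : ∀ v : ↥N, ((e₀ v : D) : C) = (v : C) * 1 * star (v : C) := fun _ => rfl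
  -- the "fixed-point" sets
  let S : ↥N → Set Ω := fun v =>
    {τ : Ω | ∀ d : D, (τ : WeakDual ℂ D) (m v d)
      = (τ : WeakDual ℂ D) (e₀ v) * (τ : WeakDual ℂ D) d}
  have hSclosed : ∀ v, IsClosed (S v) := by
    intro v
    have hrw : S v = ⋂ d : D, {τ : Ω | (τ : WeakDual ℂ D) (m v d)
        = (τ : WeakDual ℂ D) (e₀ v) * (τ : WeakDual ℂ D) d} := by
      ext τ; simp [S, Set.mem_iInter]
    rw [hrw]
    refine isClosed_iInter fun d => ?_
    exact isClosed_eq ((WeakDual.eval_continuous (m v d)).comp continuous_subtype_val)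
      (((WeakDual.eval_continuous (e₀ v)).comp continuous_subtype_val).mul
        ((WeakDual.eval_continuous d).comp continuous_subtype_val))
  have hGdense : Dense (⋂ v : ↥N, (frontier (S v))ᶜ) := by
    refine dense_iInter_of_isOpen (fun v => isClosed_frontier.isOpen_compl) (fun v => ?_)
    rw [← interior_eq_empty_iff_dense_compl]
    exact interior_frontier (hSclosed v)
  refine hGdense.mono ?_
  intro σ hσG
  simp only [Set.mem_iInter, Set.mem_compl_iff] at hσG
  obtain ⟨ρ₀, hρ₀⟩ := exists_state_extension D hDclosed σ
  have hmulc : ∀ (τ : Ω) (a b : D), (τ : WeakDual ℂ D) (a * b)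
      = (τ : WeakDual ℂ D) a * (τ : WeakDual ℂ D) b := fun τ a b => map_mul τ a b
  have honec : ∀ τ : Ω, (τ : WeakDual ℂ D) (1 : D) = 1 := fun τ => map_one τ
  -- multiplicative domain
  have hmd : ∀ (ρ : C →ₗ[ℂ] ℂ), (∀ x : C, 0 ≤ ρ (star x * x)) →
      (∀ d : D, ρ (d : C) = (σ : WeakDual ℂ D) d) →
      ∀ (d : D) (x : C), ρ ((d : C) * x) = (σ : WeakDual ℂ D) d * ρ x ∧
        ρ (x * (d : C)) = ρ x * (σ : WeakDual ℂ D) d := by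
    intro ρ hpos hD d x
    set σd := (σ : WeakDual ℂ D) d with hσd
    have hcD : (d : C) - σd • 1 ∈ D := sub_mem d.2 (SMulMemClass.smul_mem σd (one_mem D))
    set c' : D := ⟨(d : C) - σd • 1, hcD⟩ with hc'
    have hc'eq : c' = d - σd • 1 := Subtype.ext rfl
    have hσc' : (σ : WeakDual ℂ D) c' = 0 := by
      rw [hc'eq, map_sub, map_smul, honec σ]
      simp [hσd]
    have hzz1 : ρ (star (c' : C) * (c' : C)) = 0 := by
      have hcoe : (star (c' : C) * (c' : C)) = ((star c' * c' : D) : C) := rfl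
      rw [hcoe, hD (star c' * c'), hmulc σ, hσc', mul_zero]
    have hzz2 : ρ (star (star (c' : C)) * star (c' : C)) = 0 := by
      rw [star_star]
      have hcoe : ((c' : C) * star (c' : C)) = ((c' * star c' : D) : C) := rfl
      rw [hcoe, hD (c' * star c'), hmulc σ, hσc', zero_mul]
    have hz1 := fun y => (pf_zero hpos hzz1 y).2
    have hz2 := fun y => (pf_zero hpos hzz2 y).1
    constructor
    · have hxd : (d : C) * x = σd • x + (c' : C) * x := by
        show (d : C) * x = σd • x + ((d : C) - σd • 1) * x
        rw [sub_mul, smul_mul_assoc, one_mul]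
        abel
      have h2 := hz2 x
      rw [star_star] at h2
      rw [hxd, map_add, map_smul, h2, add_zero, smul_eq_mul]
    · have hxd : x * (d : C) = σd • x + x * (c' : C) := by
        show x * (d : C) = σd • x + x * ((d : C) - σd • 1)
        rw [mul_sub, mul_smul_comm, mul_one]
        abel
      rw [hxd, map_add, map_smul, hz1 x, add_zero, smul_eq_mul, mul_comm]
  -- the forced value of ρ on each v ∈ N
  have forced : ∀ v : ↥N, ∃ w : ℂ, ∀ ρ : C →ₗ[ℂ] ℂ, ρ 1 = 1 →
      (∀ x : C, 0 ≤ ρ (star x * x)) → (∀ d : D, ρ (d : C) = (σ : WeakDual ℂ D) d) →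
      ρ ↑v = w := by
    intro v
    by_cases hσS : σ ∈ S v
    · -- σ is in the interior of S v : v is locally in D
      have hσint : σ ∈ interior (S v) := by
        have hfr := hσG v
        rw [(hSclosed v).frontier_eq] at hfr
        by_contra hint
        exact hfr ⟨hσS, hint⟩
      obtain ⟨f, hf0, hf1, hf01⟩ := exists_continuous_zero_one_of_isClosed
        (isClosed_singleton (x := σ)) (isOpen_interior.isClosed_compl)
        (Set.disjoint_singleton_left.mpr fun hh => hh hσint)
      let gC : C(Ω, ℂ) := ⟨fun τ => ((1 : ℝ) - f τ : ℝ), by fun_prop⟩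
      let h : D := (gelfandStarTransform D).symm gC
      have hτh : ∀ τ : Ω, (τ : WeakDual ℂ D) h = (((1 : ℝ) - f τ : ℝ) : ℂ) := by
        intro τ
        have heq : gelfandStarTransform D h = gC := (gelfandStarTransform D).apply_symm_apply gC
        have h2 := congrFun (congrArg DFunLike.coe heq) τ
        rw [gelfandStarTransform_apply_apply] at h2
        exact h2
      have hσh : (σ : WeakDual ℂ D) h = 1 := by
        rw [hτh σ, hf0 rfl]
        norm_num
      have hτh0 : ∀ τ : Ω, τ ∉ interior (S v) → (τ : WeakDual ℂ D) h = 0 := by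
        intro τ hτ
        rw [hτh τ]
        have := hf1 hτ
        simp only [Pi.one_apply] at this
        rw [this]
        norm_num
      have hsh : star h = h := by
        have hstarg : star gC = gC := by
          ext τ
          show starRingEnd ℂ (gC τ) = gC τ
          exact Complex.conj_ofReal _
        calc star h = (gelfandStarTransform D).symm (star gC) := (map_star _ gC).symm
        _ = h := by rw [hstarg]
      have hshC : star ((h : D) : C) = ((h : D) : C) := by
        rw [← StarMemClass.coe_star, hsh]
      -- MASA step : v * h commutes with D
      have hcomm : ∀ d : D, ((v : C) * (h : C)) * (d : C) = (d : C) * ((v : C) * (h : C)) := by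
        intro d
        set y : C := ↑v * ↑h * ↑d - ↑d * ↑v * ↑h with hy
        set z : D := star d * h * (m v 1) * h * d - star d * h * (m v d) * h
            - h * (m v (star d)) * h * d + h * (m v (star d * d)) * h with hzdef
        have hyz : star y * y = (z : C) := by
          rw [hy, hzdef]
          push_cast
          simp only [hm, he₀, OneMemClass.coe_one, MulMemClass.coe_mul, StarMemClass.coe_star, star_sub, star_mul, hshC]
          noncomm_ring
        have hz0 : z = 0 := by
          have hallτ : ∀ τ : Ω, (τ : WeakDual ℂ D) z = 0 := by
            intro τ
            by_cases hτh' : (τ : WeakDual ℂ D) h = 0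
            · rw [hzdef]
              simp only [map_sub, map_add, hmulc τ, hτh', mul_zero, zero_mul]
              ring
            · have hτS : τ ∈ S v := by
                by_contra hτS
                exact hτh' (hτh0 τ (fun hin => hτS (interior_subset hin)))
              rw [hzdef]
              simp only [map_sub, map_add, hmulc τ]
              rw [hτS d, hτS 1, hτS (star d), hτS (star d * d)]
              simp only [hmulc τ, honec τ]
              ring
          have hgz : gelfandStarTransform D z = 0 := by
            ext τ
            rw [gelfandStarTransform_apply_apply]
            simpa using hallτ τ
          have := map_zero (gelfandStarTransform D).symm
          calc z = (gelfandStarTransform D).symm (gelfandStarTransform D z) :=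
                ((gelfandStarTransform D).symm_apply_apply z).symm
          _ = 0 := by rw [hgz, map_zero]
        have hy0 : y = 0 := by
          have hnn : ‖star y * y‖ = ‖y‖ * ‖y‖ := CStarRing.norm_star_mul_self
          rw [hyz, hz0] at hnn
          simp only [ZeroMemClass.coe_zero, norm_zero] at hnn
          have : ‖y‖ = 0 := by nlinarith [norm_nonneg y]
          exact norm_eq_zero.mp this
        rw [hy] at hy0
        have hyy := sub_eq_zero.mp hy0
        rw [← mul_assoc]
        exact hyy
      have hkD : ((v : C) * (h : C)) ∈ D := hmasa _ (fun d hd => hcomm ⟨d, hd⟩)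
      refine ⟨(σ : WeakDual ℂ D) ⟨_, hkD⟩, ?_⟩
      intro ρ h1 hpos hD
      have hstep := (hmd ρ hpos hD h ↑v).2
      rw [hσh, mul_one] at hstep
      calc ρ ↑v = ρ (↑v * ↑h) := hstep.symm
      _ = (σ : WeakDual ℂ D) ⟨_, hkD⟩ := hD ⟨_, hkD⟩
    · simp only [S, Set.mem_setOf_eq] at hσS
      push_neg at hσS
      obtain ⟨d₀, hd₀⟩ := hσS
      refine ⟨0, ?_⟩
      intro ρ h1 hpos hD
      have lhs : ρ (↑v * ↑(m v d₀)) = ρ ↑v * (σ : WeakDual ℂ D) (m v d₀) :=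
        (hmd ρ hpos hD (m v d₀) ↑v).2
      have hrw : ((v : C) * ↑(m v d₀) : C) = ↑(e₀ v * d₀) * ↑v := by
        rw [MulMemClass.coe_mul, hm, he₀]
        push_cast
        noncomm_ring
      have rhs : ρ (↑(e₀ v * d₀) * ↑v) = (σ : WeakDual ℂ D) (e₀ v * d₀) * ρ ↑v :=
        (hmd ρ hpos hD (e₀ v * d₀) ↑v).1
      rw [← hrw, lhs, hmulc σ] at rhs
      have hfin : ρ ↑v * ((σ : WeakDual ℂ D) (m v d₀)
          - (σ : WeakDual ℂ D) (e₀ v) * (σ : WeakDual ℂ D) d₀) = 0 := by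
        rw [mul_sub, rhs]
        ring
      rcases mul_eq_zero.mp hfin with hv0 | hc
      · exact hv0
      · exact absurd (sub_eq_zero.mp hc) hd₀
  -- pairwise uniqueness
  have main : ∀ ρ₁ ρ₂ : C →ₗ[ℂ] ℂ,
      (ρ₁ 1 = 1 ∧ (∀ x : C, 0 ≤ ρ₁ (star x * x)) ∧ ∀ d : D, ρ₁ (d : C) = (σ : WeakDual ℂ D) d) →
      (ρ₂ 1 = 1 ∧ (∀ x : C, 0 ≤ ρ₂ (star x * x)) ∧ ∀ d : D, ρ₂ (d : C) = (σ : WeakDual ℂ D) d) →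
      ρ₁ = ρ₂ := by
    rintro ρ₁ ρ₂ ⟨h11, h1pos, h1D⟩ ⟨h21, h2pos, h2D⟩
    have hcont1 : Continuous ρ₁ := AddMonoidHomClass.continuous_of_bound ρ₁ 1
      (fun x => by rw [one_mul]; exact pf_bound h1pos h11 x)
    have hcont2 : Continuous ρ₂ := AddMonoidHomClass.continuous_of_bound ρ₂ 1
      (fun x => by rw [one_mul]; exact pf_bound h2pos h21 x)
    have hEq : Set.EqOn ⇑ρ₁ ⇑ρ₂
        ((Submodule.span ℂ {x : C | ∃ v ∈ N, ∃ d ∈ D, ∃ e ∈ D, x = d * v * e} :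
          Submodule ℂ C) : Set C) := by
      intro x hx
      induction hx using Submodule.span_induction with
      | mem y hy =>
        obtain ⟨v, hvN, d, hdD, e, heD, rfl⟩ := hy
        obtain ⟨w, hw⟩ := forced ⟨v, hvN⟩
        have hw1 := hw ρ₁ h11 h1pos h1D
        have hw2 := hw ρ₂ h21 h2pos h2D
        have hassoc : d * v * e = (d : C) * (v * e) := by rw [mul_assoc]
        have c1 : ρ₁ (d * v * e) = (σ : WeakDual ℂ D) ⟨d, hdD⟩ * (w * (σ : WeakDual ℂ D) ⟨e, heD⟩) := by
          rw [hassoc, (hmd ρ₁ h1pos h1D ⟨d, hdD⟩ (v * e)).1, (hmd ρ₁ h1pos h1D ⟨e, heD⟩ v).2, hw1]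
        have c2 : ρ₂ (d * v * e) = (σ : WeakDual ℂ D) ⟨d, hdD⟩ * (w * (σ : WeakDual ℂ D) ⟨e, heD⟩) := by
          rw [hassoc, (hmd ρ₂ h2pos h2D ⟨d, hdD⟩ (v * e)).1, (hmd ρ₂ h2pos h2D ⟨e, heD⟩ v).2, hw2]
        rw [c1, c2]
      | zero => simp
      | add y z _ _ hy hz => simp [map_add, hy, hz]
      | smul a y _ hy => simp [map_smul, hy]
    have := Continuous.ext_on hNgen hcont1 hcont2 hEq
    exact LinearMap.ext fun x => congrFun this x
  exact ⟨ρ₀, hρ₀, fun ρ hρ => main ρ ρ₀ hρ hρ₀⟩
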